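/- Assume Condition (*), and suppose G is not a cycle (G has at least one edge that is not a C-edge). Then there exists a drum {{u, v}, {u+1, v+1}} of G such that all vertices of one of the two arcs of C strictly between its C-edges have degree 2 in G: either every vertex in {u+2, u+3, …, v−1} has degree 2 in G, or every vertex in {v+2, v+3, …, u−1} has degree 2 in G. -/
import Mathlib


/-- A perfect matching of `G`: a set of edges of `G` such that every vertex
lies in exactly one edge of the set. -/
def IsPerfectMatching {V : Type*} (G : SimpleGraph V) (M : Set (Sym2 V)) : Prop :=
  M ⊆ G.edgeSet ∧ ∀ v : V, ∃! e : Sym2 V, e ∈ M ∧ v ∈ e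

/-- `c` is a PMValid `k`-edge-colouring of `G`: it colours the edges of `G` with colours
in `{1, …, k}`, every perfect matching of `G` is monochromatic under `c`, and every
colour class contains a perfect matching. -/
def PMValid {V : Type*} (G : SimpleGraph V) (c : Sym2 V → ℕ) (k : ℕ) : Prop :=
  (∀ e ∈ G.edgeSet, c e ∈ Finset.Icc 1 k) ∧
  (∀ M : Set (Sym2 V), IsPerfectMatching G M → ∀ e ∈ M, ∀ e' ∈ M, c e = c e') ∧
  (∀ i ∈ Finset.Icc 1 k, ∃ M : Set (Sym2 V), IsPerfectMatching G M ∧ ∀ e ∈ M, c e = i)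

/-- `G` is matching covered: every edge lies in some perfect matching. -/
def MatchingCovered {V : Type*} (G : SimpleGraph V) : Prop :=
  ∀ e ∈ G.edgeSet, ∃ M : Set (Sym2 V), IsPerfectMatching G M ∧ e ∈ M

/-- `e` is a C-edge: an edge of the distinguished Hamiltonian cycle `0, 1, …, 2n-1`
on `ZMod (2n)`, i.e. `e = {i, i+1}` for some `i`. -/
def IsCEdge (n : ℕ) (e : Sym2 (ZMod (2 * n))) : Prop :=
  ∃ i : ZMod (2 * n), e = s(i, i + 1)

/-- `e` is a legal edge: it joins two vertices of the same parity
(the parity of the residue is well defined since the modulus `2n` is even). -/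
def IsLegal (n : ℕ) (e : Sym2 (ZMod (2 * n))) : Prop :=
  ∃ a b : ZMod (2 * n), e = s(a, b) ∧ a.val % 2 = b.val % 2

/-- `k` lies on the arc strictly between `i` and `j` in clockwise (increasing) order,
i.e. `k ∈ {i+1, i+2, …, j-1}`. -/
def InArc (n : ℕ) (i j k : ZMod (2 * n)) : Prop :=
  0 < (k - i).val ∧ (k - i).val < (j - i).val

/-- Edges `e = {a, b}` and `e'` cross: `e'` has one endpoint in `P(e)` (the arc strictly
between `a` and `b`) and its other endpoint in `P'(e)` (the arc strictly between `b` and `a`). -/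
def Crosses (n : ℕ) (e e' : Sym2 (ZMod (2 * n))) : Prop :=
  ∃ a b x y : ZMod (2 * n), e = s(a, b) ∧ e' = s(x, y) ∧ InArc n a b x ∧ InArc n b a y

/-- `{e, e'}` is a drum: an unordered pair of crossing legal edges of the form
`{u, v}` and `{u+1, v+1}`. -/
def IsDrum (n : ℕ) (e e' : Sym2 (ZMod (2 * n))) : Prop :=
  IsLegal n e ∧ IsLegal n e' ∧ Crosses n e e' ∧
  ∃ u v : ZMod (2 * n),
    (e = s(u, v) ∧ e' = s(u + 1, v + 1)) ∨ (e' = s(u, v) ∧ e = s(u + 1, v + 1))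

/-- Condition (*): `n ≥ 3`, `G` (on vertex set `ZMod (2n)`) contains every C-edge,
`G` is matching covered, `c` is a PMValid 2-edge-colouring of `G` with colours
red (= 1) and blue (= 2), and the C-edges are coloured alternately:
the edge `{i, i+1}` is red when `i` is odd and blue when `i` is even. -/
def CondStar (n : ℕ) (G : SimpleGraph (ZMod (2 * n))) (c : Sym2 (ZMod (2 * n)) → ℕ) : Prop :=
  3 ≤ n ∧ (∀ i : ZMod (2 * n), G.Adj i (i + 1)) ∧ MatchingCovered G ∧ PMValid G c 2 ∧
  ∀ i : ZMod (2 * n), c (s(i, i + 1)) = if i.val % 2 = 1 then 1 else 2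



/-- offset partner function for two crossing chords at offsets {0,a} and {p,q}. -/
def pf (a p q t : ℕ) : ℕ :=
  if t = 0 then a else if t = a then 0 else if t = p then q else if t = q then p
  else if (t < p ∨ (a < t ∧ t < q)) then (if t % 2 = 1 then t + 1 else t - 1)
  else (if t % 2 = 1 then t - 1 else t + 1)

theorem pf_eval {a p q t : ℕ} (h1 : t ≠ 0) (h2 : t ≠ a) (h3 : t ≠ p) (h4 : t ≠ q) :
    pf a p q t = if (t < p ∨ (a < t ∧ t < q)) then (if t % 2 = 1 then t + 1 else t - 1)
      else (if t % 2 = 1 then t - 1 else t + 1) := by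
  unfold pf; split_ifs <;> first | contradiction | omega

theorem pf_at0 {a p q : ℕ} : pf a p q 0 = a := by unfold pf; rw [if_pos rfl]

theorem pf_ata {a p q : ℕ} (h : a ≠ 0) : pf a p q a = 0 := by
  unfold pf; rw [if_neg h, if_pos rfl]

theorem pf_atp {a p q : ℕ} (h0 : p ≠ 0) (h2 : p ≠ a) : pf a p q p = q := by
  unfold pf; rw [if_neg h0, if_neg h2, if_pos rfl]

theorem pf_atq {a p q : ℕ} (h0 : q ≠ 0) (h2 : q ≠ a) (h3 : q ≠ p) : pf a p q q = p := by
  unfold pf; rw [if_neg h0, if_neg h2, if_neg h3, if_pos rfl]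

theorem pf_invol {N a p q : ℕ} (hN : N % 2 = 0) (h0p : 0 < p) (hpa : p < a)
    (haq : a < q) (hqN : q < N) (hp2 : p % 2 = 1) (ha2 : a % 2 = 0) (hq2 : q % 2 = 1) :
    ∀ t, t < N → pf a p q t < N ∧ pf a p q (pf a p q t) = t ∧ pf a p q t ≠ t := by
  have e0 : pf a p q 0 = a := by unfold pf; split_ifs <;> first | contradiction | omega
  have ea : pf a p q a = 0 := by unfold pf; split_ifs <;> first | contradiction | omega
  have ep : pf a p q p = q := by unfold pf; split_ifs <;> first | contradiction | omega
  have eq' : pf a p q q = p := by unfold pf; split_ifs <;> first | contradiction | omega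
  intro t ht
  by_cases h1 : t = 0; · subst h1; simp [e0, ea]; omega
  by_cases h2 : t = a; · subst h2; simp [e0, ea]; omega
  by_cases h3 : t = p; · subst h3; simp [ep, eq']; omega
  by_cases h4 : t = q; · subst h4; simp [ep, eq']; omega
  rw [pf_eval h1 h2 h3 h4]
  by_cases hin : (t < p ∨ (a < t ∧ t < q))
  · rw [if_pos hin]
    by_cases hpar : t % 2 = 1
    · rw [if_pos hpar]
      have hs : t + 1 ≠ 0 ∧ t + 1 ≠ a ∧ t + 1 ≠ p ∧ t + 1 ≠ q := by omega
      rw [pf_eval hs.1 hs.2.1 hs.2.2.1 hs.2.2.2]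
      have : (t + 1 < p ∨ (a < t + 1 ∧ t + 1 < q)) := by omega
      rw [if_pos this, if_neg (by omega)]
      exact ⟨by omega, by omega, by omega⟩
    · rw [if_neg hpar]
      have ht1 : t ≠ 1 := by omega
      have hs : t - 1 ≠ 0 ∧ t - 1 ≠ a ∧ t - 1 ≠ p ∧ t - 1 ≠ q := by omega
      rw [pf_eval hs.1 hs.2.1 hs.2.2.1 hs.2.2.2]
      have : (t - 1 < p ∨ (a < t - 1 ∧ t - 1 < q)) := by omega
      rw [if_pos this, if_pos (by omega)]
      exact ⟨by omega, by omega, by omega⟩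
  · rw [if_neg hin]
    by_cases hpar : t % 2 = 1
    · rw [if_pos hpar]
      have hs : t - 1 ≠ 0 ∧ t - 1 ≠ a ∧ t - 1 ≠ p ∧ t - 1 ≠ q := by omega
      rw [pf_eval hs.1 hs.2.1 hs.2.2.1 hs.2.2.2]
      have : ¬(t - 1 < p ∨ (a < t - 1 ∧ t - 1 < q)) := by omega
      rw [if_neg this, if_neg (by omega)]
      exact ⟨by omega, by omega, by omega⟩
    · rw [if_neg hpar]
      have hs : t + 1 ≠ 0 ∧ t + 1 ≠ a ∧ t + 1 ≠ p ∧ t + 1 ≠ q := by omega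
      rw [pf_eval hs.1 hs.2.1 hs.2.2.1 hs.2.2.2]
      have : ¬(t + 1 < p ∨ (a < t + 1 ∧ t + 1 < q)) := by omega
      rw [if_neg this, if_pos (by omega)]
      exact ⟨by omega, by omega, by omega⟩

/-- offset partner function for a single chord at offsets {0,a}, a odd. -/
def pg (a t : ℕ) : ℕ :=
  if t = 0 then a else if t = a then 0
  else if t < a then (if t % 2 = 1 then t + 1 else t - 1)
  else (if t % 2 = 1 then t - 1 else t + 1)

theorem pg_eval {a t : ℕ} (h1 : t ≠ 0) (h2 : t ≠ a) :
    pg a t = if t < a then (if t % 2 = 1 then t + 1 else t - 1)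
      else (if t % 2 = 1 then t - 1 else t + 1) := by
  unfold pg; split_ifs <;> first | contradiction | omega

theorem pg_at0 {a : ℕ} : pg a 0 = a := by unfold pg; rw [if_pos rfl]

theorem pg_ata {a : ℕ} (h : a ≠ 0) : pg a a = 0 := by
  unfold pg; rw [if_neg h, if_pos rfl]

theorem pg_invol {N a : ℕ} (hN : N % 2 = 0) (h0a : 0 < a) (haN : a < N) (ha2 : a % 2 = 1) :
    ∀ t, t < N → pg a t < N ∧ pg a (pg a t) = t ∧ pg a t ≠ t := by
  have e0 : pg a 0 = a := by unfold pg; split_ifs <;> first | contradiction | omega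
  have ea : pg a a = 0 := by unfold pg; split_ifs <;> first | contradiction | omega
  intro t ht
  by_cases h1 : t = 0; · subst h1; simp [e0, ea]; omega
  by_cases h2 : t = a; · subst h2; simp [e0, ea]; omega
  rw [pg_eval h1 h2]
  by_cases hin : t < a
  · rw [if_pos hin]
    by_cases hpar : t % 2 = 1
    · rw [if_pos hpar]
      have hs : t + 1 ≠ 0 ∧ t + 1 ≠ a := by omega
      rw [pg_eval hs.1 hs.2, if_pos (by omega), if_neg (by omega)]
      exact ⟨by omega, by omega, by omega⟩
    · rw [if_neg hpar]
      have hs : t - 1 ≠ 0 ∧ t - 1 ≠ a := by omega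
      rw [pg_eval hs.1 hs.2, if_pos (by omega), if_pos (by omega)]
      exact ⟨by omega, by omega, by omega⟩
  · rw [if_neg hin]
    by_cases hpar : t % 2 = 1
    · rw [if_pos hpar]
      have hs : t - 1 ≠ 0 ∧ t - 1 ≠ a := by omega
      rw [pg_eval hs.1 hs.2, if_neg (by omega), if_neg (by omega)]
      exact ⟨by omega, by omega, by omega⟩
    · rw [if_neg hpar]
      have hs : t + 1 ≠ 0 ∧ t + 1 ≠ a := by omega
      rw [pg_eval hs.1 hs.2, if_neg (by omega), if_pos (by omega)]
      exact ⟨by omega, by omega, by omega⟩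

/-- A perfect matching from a fixed-point-free involution whose orbits are edges. -/
theorem pm_of_partner {V : Type*} {G : SimpleGraph V} (π : V → V)
    (hinv : ∀ w, π (π w) = w) (hadj : ∀ w, G.Adj w (π w)) :
    (({e | ∃ w, e = s(w, π w)} : Set (Sym2 V)) ⊆ G.edgeSet ∧
      ∀ v : V, ∃! e : Sym2 V, e ∈ ({e | ∃ w, e = s(w, π w)} : Set (Sym2 V)) ∧ v ∈ e) := by
  constructor
  · rintro e ⟨w, rfl⟩
    exact (hadj w)
  · intro v
    refine ⟨s(v, π v), ⟨⟨v, rfl⟩, Sym2.mem_mk_left _ _⟩, ?_⟩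
    rintro e ⟨⟨w, rfl⟩, hv⟩
    rcases Sym2.mem_iff.mp hv with rfl | rfl
    · rfl
    · rw [Sym2.eq_swap, hinv]

theorem pm_build {n : ℕ} (hn : 3 ≤ n) {G : SimpleGraph (ZMod (2*n))}
    (β : ZMod (2*n)) (f : ℕ → ℕ)
    (hf : ∀ t, t < 2*n → f t < 2*n ∧ f (f t) = t)
    (hadj : ∀ t, t < 2*n → G.Adj (β + (t:ℕ)) (β + (f t : ℕ))) :
    ∃ M : Set (Sym2 (ZMod (2*n))), IsPerfectMatching G M ∧
      ∀ t, t < 2*n → s(β + (t:ℕ), β + (f t : ℕ)) ∈ M := by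
  haveI : NeZero (2*n) := ⟨by omega⟩
  set π : ZMod (2*n) → ZMod (2*n) := fun w => β + (f (w - β).val : ℕ) with hπ
  have hval : ∀ t : ℕ, t < 2*n → ((β + (t:ℕ)) - β).val = t := by
    intro t ht; rw [add_sub_cancel_left, ZMod.val_cast_of_lt ht]
  have hπw : ∀ w : ZMod (2*n), π w = β + (f (w - β).val : ℕ) := fun _ => rfl
  have hrep : ∀ w : ZMod (2*n), w = β + ((w - β).val : ℕ) := by
    intro w; rw [ZMod.natCast_zmod_val]; ring
  have hinv : ∀ w, π (π w) = w := by
    intro w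
    have h1 : (w - β).val < 2*n := ZMod.val_lt _
    rw [hπw, hπw, hval _ ((hf _ h1).1), (hf _ h1).2]
    exact (hrep w).symm
  have hadj' : ∀ w, G.Adj w (π w) := by
    intro w
    have h1 : (w - β).val < 2*n := ZMod.val_lt _
    have := hadj _ h1
    rwa [← hrep w] at this
  obtain ⟨h1, h2⟩ := pm_of_partner π hinv hadj'
  refine ⟨_, ⟨h1, h2⟩, ?_⟩
  intro t ht
  exact ⟨β + (t:ℕ), by rw [hπw, hval t ht]⟩

theorem zrep {n : ℕ} (hn : 3 ≤ n) (β w : ZMod (2*n)) :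
    w = β + (((w - β).val : ℕ) : ZMod (2*n)) := by
  haveI : NeZero (2*n) := ⟨by omega⟩
  rw [ZMod.natCast_zmod_val]; ring

theorem valp {n : ℕ} (hn : 3 ≤ n) (β : ZMod (2*n)) (t : ℕ) :
    (β + (t:ℕ)).val % 2 = (β.val + t) % 2 := by
  haveI : NeZero (2*n) := ⟨by omega⟩
  have h2 : 2 ∣ 2*n := ⟨n, rfl⟩
  rw [ZMod.val_add, ZMod.val_natCast]
  rw [Nat.mod_mod_of_dvd _ h2, Nat.add_mod, Nat.mod_mod_of_dvd _ h2, ← Nat.add_mod]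

theorem val_sub_comm {n : ℕ} (hn : 3 ≤ n) {x y : ZMod (2*n)} (hxy : x ≠ y) :
    (x - y).val = 2*n - (y - x).val := by
  haveI : NeZero (2*n) := ⟨by omega⟩
  haveI : NeZero (y - x) := ⟨sub_ne_zero.mpr (Ne.symm hxy)⟩
  have := ZMod.val_neg_of_ne_zero (y - x)
  rwa [neg_sub] at this

theorem cast_inj_small {n : ℕ} (hn : 3 ≤ n) {t t' : ℕ} (ht : t < 2*n) (ht' : t' < 2*n)
    (h : ((t:ℕ) : ZMod (2*n)) = (t' : ℕ)) : t = t' := by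
  haveI : NeZero (2*n) := ⟨by omega⟩
  have := congrArg ZMod.val h
  rwa [ZMod.val_cast_of_lt ht, ZMod.val_cast_of_lt ht'] at this

/-- the perfect matching from two crossing chords plus C-edge fills. -/
theorem pm_two {n : ℕ} {G : SimpleGraph (ZMod (2*n))} {c : Sym2 (ZMod (2*n)) → ℕ}
    (h : CondStar n G c) (β : ZMod (2*n)) (a p q : ℕ)
    (h0p : 0 < p) (hpa : p < a) (haq : a < q) (hqN : q < 2*n)
    (hp2 : p % 2 = 1) (ha2 : a % 2 = 0) (hq2 : q % 2 = 1)
    (hX : s(β, β + (a:ℕ)) ∈ G.edgeSet) (hY : s(β + (p:ℕ), β + (q:ℕ)) ∈ G.edgeSet) :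
    ∃ M : Set (Sym2 (ZMod (2*n))), IsPerfectMatching G M ∧
      ∀ t, t < 2*n → s(β + (t:ℕ), β + (pf a p q t : ℕ)) ∈ M := by
  have hn := h.1
  have hC := h.2.1
  have hN2 : (2*n) % 2 = 0 := by omega
  apply pm_build hn β _
    (fun t ht => ⟨(pf_invol hN2 h0p hpa haq hqN hp2 ha2 hq2 t ht).1,
                  (pf_invol hN2 h0p hpa haq hqN hp2 ha2 hq2 t ht).2.1⟩)
  intro t ht
  by_cases h1 : t = 0
  · have hv : pf a p q t = a := by unfold pf; split_ifs <;> first | contradiction | omega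
    rw [hv, h1]
    simpa using (G.mem_edgeSet.mp hX)
  by_cases h2 : t = a
  · have hv : pf a p q t = 0 := by unfold pf; split_ifs <;> first | contradiction | omega
    rw [hv, h2]
    simpa using (G.mem_edgeSet.mp hX).symm
  by_cases h3 : t = p
  · have hv : pf a p q t = q := by unfold pf; split_ifs <;> first | contradiction | omega
    rw [hv, h3]; exact G.mem_edgeSet.mp hY
  by_cases h4 : t = q
  · have hv : pf a p q t = p := by unfold pf; split_ifs <;> first | contradiction | omega
    rw [hv, h4]; exact (G.mem_edgeSet.mp hY).symm
  · rw [pf_eval h1 h2 h3 h4]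
    have hup : ∀ t' : ℕ, G.Adj (β + (t':ℕ)) (β + (t'+1:ℕ)) := by
      intro t'
      have hc : ((t'+1:ℕ) : ZMod (2*n)) = (t':ℕ) + 1 := by push_cast; ring
      rw [hc, ← add_assoc]
      exact hC _
    split_ifs with hin hpar hpar
    · exact hup t
    · have h1t : 1 ≤ t := by omega
      have hc : ((t:ℕ) : ZMod (2*n)) = ((t-1:ℕ):ZMod (2*n)) + 1 := by
        have : t - 1 + 1 = t := by omega
        rw [← this]; push_cast; ring
      rw [hc, ← add_assoc]
      exact (hC _).symm
    · have h1t : 1 ≤ t := by omega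
      have hc : ((t:ℕ) : ZMod (2*n)) = ((t-1:ℕ):ZMod (2*n)) + 1 := by
        have : t - 1 + 1 = t := by omega
        rw [← this]; push_cast; ring
      rw [hc, ← add_assoc]
      exact (hC _).symm
    · exact hup t

/-- the perfect matching from one chord plus C-edge fills. -/
theorem pm_one {n : ℕ} {G : SimpleGraph (ZMod (2*n))} {c : Sym2 (ZMod (2*n)) → ℕ}
    (h : CondStar n G c) (β : ZMod (2*n)) (a : ℕ)
    (h0a : 0 < a) (haN : a < 2*n) (ha2 : a % 2 = 1)
    (hX : s(β, β + (a:ℕ)) ∈ G.edgeSet) :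
    ∃ M : Set (Sym2 (ZMod (2*n))), IsPerfectMatching G M ∧
      ∀ t, t < 2*n → s(β + (t:ℕ), β + (pg a t : ℕ)) ∈ M := by
  have hn := h.1
  have hC := h.2.1
  have hN2 : (2*n) % 2 = 0 := by omega
  apply pm_build hn β _
    (fun t ht => ⟨(pg_invol hN2 h0a haN ha2 t ht).1, (pg_invol hN2 h0a haN ha2 t ht).2.1⟩)
  intro t ht
  by_cases h1 : t = 0
  · have hv : pg a t = a := by unfold pg; split_ifs <;> first | contradiction | omega
    rw [hv, h1]
    simpa using (G.mem_edgeSet.mp hX)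
  by_cases h2 : t = a
  · have hv : pg a t = 0 := by unfold pg; split_ifs <;> first | contradiction | omega
    rw [hv, h2]
    simpa using (G.mem_edgeSet.mp hX).symm
  · rw [pg_eval h1 h2]
    have hup : ∀ t' : ℕ, G.Adj (β + (t':ℕ)) (β + (t'+1:ℕ)) := by
      intro t'
      have hc : ((t'+1:ℕ) : ZMod (2*n)) = (t':ℕ) + 1 := by push_cast; ring
      rw [hc, ← add_assoc]
      exact hC _
    have hdown : 1 ≤ t → G.Adj (β + (t:ℕ)) (β + (t-1:ℕ)) := by
      intro h1t
      have hc : ((t:ℕ) : ZMod (2*n)) = ((t-1:ℕ):ZMod (2*n)) + 1 := by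
        have : t - 1 + 1 = t := by omega
        rw [← this]; push_cast; ring
      rw [hc, ← add_assoc]
      exact (hC _).symm
    split_ifs with hin hpar hpar
    · exact hup t
    · exact hdown (by omega)
    · exact hdown (by omega)
    · exact hup t

theorem cast_add_nat {N : ℕ} (a b cc : ℕ) (h : a + b = cc) :
    ((a:ℕ):ZMod N) + ((b:ℕ):ZMod N) = ((cc:ℕ):ZMod N) := by rw [← Nat.cast_add, h]

theorem cedge_cases {n : ℕ} {x y : ZMod (2*n)} (h : IsCEdge n s(x,y)) :
    y = x + 1 ∨ x = y + 1 := by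
  obtain ⟨j, hj⟩ := h
  rw [Sym2.eq_iff] at hj
  rcases hj with ⟨rfl, rfl⟩ | ⟨rfl, rfl⟩
  · left; rfl
  · right; rfl

theorem chord_span {n : ℕ} {G : SimpleGraph (ZMod (2*n))} {c : Sym2 (ZMod (2*n)) → ℕ}
    (h : CondStar n G c) {x y : ZMod (2*n)}
    (hxy : s(x,y) ∈ G.edgeSet) (hnc : ¬ IsCEdge n s(x,y)) :
    2 ≤ (y-x).val ∧ (y-x).val ≤ 2*n - 2 := by
  have hn := h.1
  haveI : NeZero (2*n) := ⟨by omega⟩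
  have hadj : G.Adj x y := G.mem_edgeSet.mp hxy
  have hne : x ≠ y := hadj.ne
  have h0 : (y - x).val ≠ 0 := by
    intro h0
    exact hne (by rw [(ZMod.val_eq_zero _).mp h0 |> sub_eq_zero.mp])
  have h1 : (y - x).val ≠ 1 := by
    intro h1
    have : y = x + (((y-x).val : ℕ) : ZMod (2*n)) := zrep hn x y
    rw [h1] at this
    exact hnc ⟨x, by rw [this]; norm_num⟩
  have hlt : (y - x).val < 2*n := ZMod.val_lt _
  have h2 : (y - x).val ≠ 2*n - 1 := by
    intro h2
    have hc : (x - y).val = 1 := by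
      rw [val_sub_comm hn hne, h2]; omega
    have : x = y + (((x-y).val : ℕ) : ZMod (2*n)) := zrep hn y x
    rw [hc] at this
    refine hnc ⟨y, ?_⟩
    rw [Sym2.eq_swap]
    rw [this]; norm_num
  omega

theorem chord_even {n : ℕ} {G : SimpleGraph (ZMod (2*n))} {c : Sym2 (ZMod (2*n)) → ℕ}
    (h : CondStar n G c) {x y : ZMod (2*n)}
    (hxy : s(x,y) ∈ G.edgeSet) (hnc : ¬ IsCEdge n s(x,y)) :
    (y - x).val % 2 = 0 := by
  have hn := h.1
  by_contra hodd
  set d := (y - x).val with hd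
  obtain ⟨hd2, hdN⟩ := chord_span h hxy hnc
  have hX : s(x, x + (d:ℕ)) ∈ G.edgeSet := by
    rw [← zrep hn x y]; exact hxy
  obtain ⟨M, hPM, hmem⟩ := pm_one h x d (by omega) (by omega) (by omega) hX
  have he₁ := hmem 1 (by omega)
  have he₂ := hmem (d+1) (by omega)
  have hv1 : pg d 1 = 2 := by unfold pg; split_ifs <;> first | contradiction | omega
  have hv2 : pg d (d+1) = d+2 := by unfold pg; split_ifs <;> first | contradiction | omega
  rw [hv1] at he₁
  rw [hv2] at he₂
  have hmono := h.2.2.2.1.2.1 M hPM _ he₁ _ he₂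
  have hr1 : (x + (2:ℕ) : ZMod (2*n)) = (x + (1:ℕ)) + 1 := by push_cast; ring
  have hr2 : (x + (d+2:ℕ) : ZMod (2*n)) = (x + (d+1:ℕ)) + 1 := by push_cast; ring
  rw [hr1, hr2, h.2.2.2.2, h.2.2.2.2, valp hn, valp hn] at hmono
  split_ifs at hmono <;> omega

theorem col_cedge {n : ℕ} {G : SimpleGraph (ZMod (2*n))} {c : Sym2 (ZMod (2*n)) → ℕ}
    (h : CondStar n G c) (β : ZMod (2*n)) (t : ℕ) :
    c (s(β + (t:ℕ), β + (t+1:ℕ))) = if (β.val + t) % 2 = 1 then 1 else 2 := by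
  have hr : (β + (t+1:ℕ) : ZMod (2*n)) = (β + (t:ℕ)) + 1 := by push_cast; ring
  rw [hr, h.2.2.2.2, valp h.1]

theorem sym2_get {V : Type*} {E : Sym2 V} {w : V} (h : w ∈ E) : ∃ z, E = s(w, z) := by
  revert h
  induction E using Sym2.ind with
  | _ x y =>
    intro h
    rcases Sym2.mem_iff.mp h with rfl | rfl
    · exact ⟨y, rfl⟩
    · exact ⟨x, Sym2.eq_swap⟩

theorem partner_exists {V : Type*} {G : SimpleGraph V} {M : Set (Sym2 V)}
    (hM : IsPerfectMatching G M) (w : V) : ∃ z, s(w, z) ∈ M := by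
  obtain ⟨E, ⟨hEM, hEw⟩, _⟩ := hM.2 w
  obtain ⟨z, rfl⟩ := sym2_get hEw
  exact ⟨z, hEM⟩

theorem partner_unique {V : Type*} {G : SimpleGraph V} {M : Set (Sym2 V)}
    (hM : IsPerfectMatching G M) {w z z' : V}
    (h1 : s(w,z) ∈ M) (h2 : s(w,z') ∈ M) : z = z' := by
  obtain ⟨E, _, huniq⟩ := hM.2 w
  have e1 := huniq _ ⟨h1, Sym2.mem_mk_left _ _⟩
  have e2 := huniq _ ⟨h2, Sym2.mem_mk_left _ _⟩
  rw [← e2] at e1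
  exact Sym2.congr_right.mp e1

set_option maxHeartbeats 1600000 in
theorem statement_10 (n : ℕ) (G : SimpleGraph (ZMod (2 * n)))
    (c : Sym2 (ZMod (2 * n)) → ℕ) (h : CondStar n G c)
    (hnotcycle : ∃ e ∈ G.edgeSet, ¬ IsCEdge n e) :
    ∃ u v : ZMod (2 * n), s(u, v) ∈ G.edgeSet ∧ s(u + 1, v + 1) ∈ G.edgeSet ∧
      IsDrum n (s(u, v)) (s(u + 1, v + 1)) ∧
      ((∀ k : ZMod (2 * n), InArc n (u + 1) v k → (G.neighborSet k).ncard = 2) ∨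
       (∀ k : ZMod (2 * n), InArc n (v + 1) u k → (G.neighborSet k).ncard = 2)) := by
  have hn := h.1
  haveI : NeZero (2*n) := ⟨by omega⟩
  have hC := h.2.1
  have hmono := h.2.2.2.1.2.1
  -- the set of chord spans
  set S : Set ℕ :=
    {d | ∃ x : ZMod (2*n), s(x, x + (d:ℕ)) ∈ G.edgeSet ∧ ¬ IsCEdge n s(x, x + (d:ℕ))}
    with hS
  obtain ⟨e₀, he₀, hnc₀⟩ := hnotcycle
  obtain ⟨⟨x₀, y₀⟩, rfl⟩ := Quot.exists_rep e₀
  have hSne : (y₀ - x₀).val ∈ S := by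
    refine ⟨x₀, ?_, ?_⟩ <;> rw [← zrep hn x₀ y₀] <;> assumption
  -- minimality
  have hmem := Nat.sInf_mem ⟨_, hSne⟩
  set m := sInf S with hmdef
  obtain ⟨u, hX, hncE⟩ := hmem
  have Hmin : ∀ x y : ZMod (2*n), s(x,y) ∈ G.edgeSet → ¬ IsCEdge n s(x,y) →
      m ≤ (y - x).val := by
    intro x y hxy hnc
    apply Nat.sInf_le
    exact ⟨x, by rw [← zrep hn x y]; exact hxy, by rw [← zrep hn x y]; exact hnc⟩
  -- basic facts about m
  have hmlt : m < 2*n := by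
    have : (y₀ - x₀).val < 2*n := ZMod.val_lt _
    have := Nat.sInf_le hSne
    omega
  clear_value m
  have hvm : ((u + (m:ℕ)) - u).val = m := by
    rw [add_sub_cancel_left, ZMod.val_cast_of_lt hmlt]
  have hspan := chord_span h hX hncE
  rw [hvm] at hspan
  have hm2 : 2 ≤ m := hspan.1
  have hmN : m ≤ 2*n - 2 := hspan.2
  have hmeven : m % 2 = 0 := by
    have := chord_even h hX hncE
    rwa [hvm] at this
  -- colour of the minimal chord
  have hi := Finset.mem_Icc.mp (h.2.2.2.1.1 _ hX)
  set i := c (s(u, u + (m:ℕ))) with hidef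
  obtain ⟨M, hM, heM⟩ := h.2.2.1 _ hX
  -- generic: colour of any edge of M is i
  have hcM : ∀ E ∈ M, c E = i := fun E hE => (hmono M hM _ hE _ heM)
  by_cases hug : (i = 1 ∧ u.val % 2 = 1) ∨ (i = 2 ∧ u.val % 2 = 0)
  · -- CASE s = +1 : drum is {u,v},{u+1,v+1}
    obtain ⟨z, hzM⟩ := partner_exists hM (u + 1)
    have hzE : s(u+1, z) ∈ G.edgeSet := hM.1 hzM
    have hzadj : G.Adj (u+1) z := G.mem_edgeSet.mp hzE
    set ζ := (z - u).val with hzdef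
    have hzrep : z = u + (ζ:ℕ) := by rw [hzdef]; exact zrep hn u z
    have hzsub : z - u = ((ζ:ℕ) : ZMod (2*n)) := by
      rw [hzdef, ZMod.natCast_zmod_val]
    have hζlt : ζ < 2*n := ZMod.val_lt _
    have hcast : ∀ t : ℕ, t < 2*n → ((u + (t:ℕ)) - u).val = t := by
      intro t ht; rw [add_sub_cancel_left, ZMod.val_cast_of_lt ht]
    have hζ1 : ζ ≠ 1 := by
      intro h1
      apply hzadj.ne
      rw [hzrep, h1]; norm_num
    have hζ0 : ζ ≠ 0 := by
      intro h0
      have hzu : z = u := by rw [hzrep, h0]; norm_num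
      rw [hzu] at hzM
      have h1 : s(u, u+1) ∈ M := by rwa [Sym2.eq_swap] at hzM
      have := partner_unique hM h1 heM
      rw [← this] at hvm
      rw [add_sub_cancel_left] at hvm
      have : ZMod.val (1 : ZMod (2*n)) = 1 := by
        rw [show (1 : ZMod (2*n)) = ((1:ℕ) : ZMod (2*n)) by norm_num,
          ZMod.val_cast_of_lt (by omega)]
      omega
    have hζ2 : ζ ≠ 2 := by
      intro h2
      have hcM' := hcM _ hzM
      rw [hzrep, h2] at hcM'
      have hconv : s(u+1, u + ((2:ℕ):ZMod (2*n))) = s(u + ((1:ℕ):ZMod (2*n)), u + ((1+1:ℕ):ZMod (2*n))) := by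
        norm_num
      rw [hconv, col_cedge h u 1] at hcM'
      split_ifs at hcM' <;> omega
    have hncz : ¬ IsCEdge n s(u+1, z) := by
      intro hce
      rcases cedge_cases hce with h1 | h1
      · apply hζ2
        have : z - u = ((2:ℕ) : ZMod (2*n)) := by rw [h1]; push_cast; ring
        rw [hzdef, this, ZMod.val_cast_of_lt (by omega)]
      · apply hζ0
        have : z = u := by
          have := congrArg (fun x => x - 1) h1
          simpa using this.symm
        rw [hzdef, this, sub_self, ZMod.val_zero]
    have hζspan : (z - (u+1)).val = ζ - 1 := by
      have : z - (u+1) = ((ζ - 1 : ℕ) : ZMod (2*n)) := by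
        rw [hzrep]
        push_cast [Nat.cast_sub (by omega : 1 ≤ ζ)]
        ring
      rw [this, ZMod.val_cast_of_lt (by omega)]
    have hζodd : ζ % 2 = 1 := by
      have := chord_even h hzE hncz
      rw [hζspan] at this
      omega
    have hζm : m < ζ := by
      by_contra hle
      have := Hmin _ _ hzE hncz
      rw [hζspan] at this
      omega
    -- force ζ = m + 1
    have hζeq : ζ = m + 1 := by
      by_contra hne
      have hζm3 : m + 1 < ζ := by omega
      obtain ⟨N, hN, hmemN⟩ := pm_two h u m 1 ζ (by omega) (by omega) hζm hζlt
        (by omega) hmeven hζodd hX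
        (by rw [show (u + ((1:ℕ):ZMod (2*n))) = u + 1 by norm_num, ← hzrep]; exact hzE)
      have he0 := hmemN 0 (by omega)
      rw [pf_at0] at he0
      norm_num at he0
      have hecl := hmemN (m+1) (by omega)
      have hv1 : pf m 1 ζ (m+1) = m+2 := by
        rw [pf_eval (by omega) (by omega) (by omega) (by omega), if_pos (by omega),
          if_pos (by omega)]
      rw [hv1] at hecl
      have hmm := hmono N hN _ he0 _ hecl
      rw [col_cedge h u (m+1)] at hmm
      rw [← hidef] at hmm
      split_ifs at hmm <;> omega
    have hzv : z = u + (m:ℕ) + 1 := by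
      rw [hzrep, hζeq]; push_cast; ring
    have he' : s(u + 1, (u + (m:ℕ)) + 1) ∈ G.edgeSet := by rw [← hzv]; exact hzE
    -- colour of the partner chord e' = s(u+1, v+1)
    have hce' : c (s(u + ((1:ℕ):ZMod (2*n)), u + ((m+1:ℕ):ZMod (2*n)))) = i := by
      obtain ⟨N, hN, hmemN⟩ := pm_two h u m 1 (m+1) (by omega) (by omega) (by omega)
        (by omega) (by omega) hmeven (by omega) hX
        (by
          have h1 : (u + ((1:ℕ):ZMod (2*n))) = u + 1 := by norm_num
          have h2 : (u + ((m+1:ℕ):ZMod (2*n))) = (u + ((m:ℕ):ZMod (2*n))) + 1 := by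
            push_cast; ring
          rw [h1, h2]; exact he')
      have he0 := hmemN 0 (by omega)
      rw [pf_at0] at he0
      norm_num at he0
      have he1 := hmemN 1 (by omega)
      rw [pf_atp (by omega) (by omega)] at he1
      have := hmono N hN _ he0 _ he1
      rw [← hidef] at this
      exact this.symm
    -- interior vertices have degree 2
    have hfree : ∀ k : ZMod (2*n), InArc n (u+1) (u + ((m:ℕ):ZMod (2*n))) k →
        (G.neighborSet k).ncard = 2 := by
      intro k hk
      obtain ⟨hk1, hk2⟩ := hk
      have hkv : ((u + ((m:ℕ):ZMod (2*n))) - (u+1)).val = m - 1 := by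
        have hh : (u + ((m:ℕ):ZMod (2*n))) - (u+1) = ((m-1:ℕ) : ZMod (2*n)) := by
          push_cast [Nat.cast_sub (by omega : 1 ≤ m)]; ring
        rw [hh, ZMod.val_cast_of_lt (by omega)]
      rw [hkv] at hk2
      obtain ⟨τ, hτdef⟩ : ∃ τ : ℕ, τ = (k - (u+1)).val := ⟨_, rfl⟩
      rw [← hτdef] at hk1 hk2
      have hkrep : k = u + ((τ+1 : ℕ) : ZMod (2*n)) := by
        have h1 : k = (u+1) + ((τ:ℕ) : ZMod (2*n)) := by rw [hτdef]; exact zrep hn (u+1) k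
        rw [h1]; push_cast; ring
      obtain ⟨t, htdef⟩ : ∃ t : ℕ, t = τ + 1 := ⟨_, rfl⟩
      rw [← htdef] at hkrep
      have ht2 : 2 ≤ t := by omega
      have htm : t ≤ m - 1 := by omega
      have hinj : ∀ s t' : ℕ, s < 2*n → t' < 2*n →
          (u + ((s:ℕ):ZMod (2*n)) : ZMod (2*n)) = u + ((t':ℕ):ZMod (2*n)) → s = t' := by
        intro s t' hs ht' heq
        exact cast_inj_small hn hs ht' (by exact add_left_cancel heq)
      have hsub1 : ∀ (ha hb : ℕ), ha < hb → hb < 2*n →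
          ((u + ((hb:ℕ):ZMod (2*n))) - (u + ((ha:ℕ):ZMod (2*n))) : ZMod (2*n)).val = hb - ha := by
        intro ha hb h1 h2
        have hh : (u + ((hb:ℕ):ZMod (2*n))) - (u + ((ha:ℕ):ZMod (2*n)))
            = ((hb - ha : ℕ) : ZMod (2*n)) := by
          push_cast [Nat.cast_sub (le_of_lt h1)]; ring
        rw [hh, ZMod.val_cast_of_lt (by omega)]
      have hsub : G.neighborSet k ⊆ {k - 1, k + 1} := by
        intro w hw
        simp only [SimpleGraph.mem_neighborSet] at hw
        by_contra hwn
        simp only [Set.mem_insert_iff, Set.mem_singleton_iff] at hwn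
        push_neg at hwn
        obtain ⟨hw1, hw2⟩ := hwn
        obtain ⟨η, hηdef⟩ : ∃ η : ℕ, η = (w - u).val := ⟨_, rfl⟩
        have hwrep : w = u + ((η : ℕ) : ZMod (2*n)) := by rw [hηdef]; exact zrep hn u w
        have hηlt : η < 2*n := by rw [hηdef]; exact ZMod.val_lt _
        have hηt : η ≠ t := by
          intro hh
          exact hw.ne (by rw [hkrep, hwrep, hh])
        have hηt1 : η ≠ t + 1 := by
          intro hh
          apply hw2
          rw [hwrep, hh, hkrep]; push_cast; ring
        have hηt0 : η ≠ t - 1 := by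
          intro hh
          apply hw1
          rw [hwrep, hh, hkrep]
          push_cast [Nat.cast_sub (by omega : 1 ≤ t)]; ring
        have hkwE : s(k, w) ∈ G.edgeSet := G.mem_edgeSet.mpr hw
        have hnckw : ¬ IsCEdge n s(k, w) := by
          intro hce
          rcases cedge_cases hce with h1 | h1
          · apply hηt1
            apply hinj η (t+1) hηlt (by omega)
            rw [← hwrep, h1, hkrep]; push_cast; ring
          · apply hηt0
            apply hinj η (t-1) hηlt (by omega)
            rw [← hwrep, show w = k - 1 from by rw [h1]; ring, hkrep]
            push_cast [Nat.cast_sub (by omega : 1 ≤ t)]; ring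
        have hηm : m < η := by
          by_contra hle
          push_neg at hle
          rcases Nat.lt_or_ge η t with hlt | hge
          · have hsp := Hmin w k (by rwa [Sym2.eq_swap]) (by rw [Sym2.eq_swap]; exact hnckw)
            rw [hkrep, hwrep, hsub1 η t hlt (by omega)] at hsp
            omega
          · have hgt : t < η := by omega
            have hsp := Hmin k w hkwE hnckw
            rw [hkrep, hwrep, hsub1 t η hgt (by omega)] at hsp
            omega
        have hηpar : η % 2 = t % 2 := by
          have hpp := chord_even h hkwE hnckw
          rw [hkrep, hwrep, hsub1 t η (by omega) (by omega)] at hpp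
          omega
        by_cases htpar : t % 2 = 1
        · obtain ⟨N, hN, hmemN⟩ := pm_two h u m t η (by omega) (by omega) hηm (by omega)
            htpar hmeven (by omega) hX
            (by rw [← hkrep, ← hwrep]; exact hkwE)
          have he0 := hmemN 0 (by omega)
          rw [pf_at0] at he0
          norm_num at he0
          have he1 := hmemN 1 (by omega)
          have hv1 : pf m t η 1 = 2 := by
            rw [pf_eval (by omega) (by omega) (by omega) (by omega), if_pos (by omega),
              if_pos (by omega)]
          rw [hv1, show ((2:ℕ):ZMod (2*n)) = ((1+1:ℕ):ZMod (2*n)) from by norm_num] at he1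
          have hmm := hmono N hN _ he0 _ he1
          rw [col_cedge h u 1] at hmm
          rw [← hidef] at hmm
          split_ifs at hmm <;> omega
        · obtain ⟨N, hN, hmemN⟩ := pm_two h (u+1) m (t-1) (η-1) (by omega) (by omega)
            (by omega) (by omega) (by omega) hmeven (by omega)
            (by
              have hh : (u+1) + ((m:ℕ) : ZMod (2*n)) = (u + ((m:ℕ):ZMod (2*n))) + 1 := by ring
              rw [hh]; exact he')
            (by
              have h1 : (u+1) + ((t-1:ℕ) : ZMod (2*n)) = u + ((t:ℕ):ZMod (2*n)) := by
                push_cast [Nat.cast_sub (by omega : 1 ≤ t)]; ring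
              have h2 : (u+1) + ((η-1:ℕ) : ZMod (2*n)) = u + ((η:ℕ):ZMod (2*n)) := by
                push_cast [Nat.cast_sub (by omega : 1 ≤ η)]; ring
              rw [h1, h2, ← hkrep, ← hwrep]; exact hkwE)
          have he0 := hmemN 0 (by omega)
          rw [pf_at0] at he0
          norm_num at he0
          have hecl := hmemN t (by omega)
          have hvt : pf m (t-1) (η-1) t = t+1 := by
            rw [pf_eval (by omega) (by omega) (by omega) (by omega), if_neg (by omega),
              if_neg (by omega)]
          rw [hvt] at hecl
          have hmm := hmono N hN _ he0 _ hecl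
          have hXedge : s((u+1 : ZMod (2*n)), (u+1) + ((m:ℕ):ZMod (2*n)))
              = s(u + ((1:ℕ):ZMod (2*n)), u + ((m+1:ℕ):ZMod (2*n))) := by
            rw [show (u+1) + ((m:ℕ):ZMod (2*n)) = u + ((m+1:ℕ):ZMod (2*n)) from by
              push_cast; ring]
            rw [show (u+1 : ZMod (2*n)) = u + ((1:ℕ):ZMod (2*n)) from by norm_num]
          rw [hXedge, hce'] at hmm
          have hcl1 : (u+1) + ((t:ℕ) : ZMod (2*n)) = u + ((t+1:ℕ):ZMod (2*n)) := by
            push_cast; ring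
          have hcl2 : (u+1) + ((t+1:ℕ) : ZMod (2*n)) = u + ((t+1+1:ℕ):ZMod (2*n)) := by
            push_cast; ring
          rw [hcl1, hcl2, col_cedge h u (t+1)] at hmm
          split_ifs at hmm <;> omega
      have hsup : {k - 1, k + 1} ⊆ G.neighborSet k := by
        intro w hw
        simp only [Set.mem_insert_iff, Set.mem_singleton_iff] at hw
        rcases hw with rfl | rfl
        · simp only [SimpleGraph.mem_neighborSet]
          have hh := hC (k - 1)
          rw [sub_add_cancel] at hh
          exact hh.symm
        · exact hC k
      rw [subset_antisymm hsub hsup]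
      rw [Set.ncard_pair]
      intro hcontra
      have h2 : ((2:ℕ) : ZMod (2*n)) = 0 := by push_cast; linear_combination -hcontra
      have hval2 := congrArg ZMod.val h2
      rw [ZMod.val_cast_of_lt (by omega : (2:ℕ) < 2*n), ZMod.val_zero] at hval2
      omega
    -- assembly
    have huv : u ≠ u + ((m:ℕ):ZMod (2*n)) := by
      intro hh
      rw [← hh, sub_self, ZMod.val_zero] at hvm
      omega
    have hval1 : (1 : ZMod (2*n)).val = 1 := by
      rw [show (1 : ZMod (2*n)) = ((1:ℕ):ZMod (2*n)) by norm_num,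
        ZMod.val_cast_of_lt (by omega)]
    refine ⟨u, u + ((m:ℕ):ZMod (2*n)), hX, he', ?_, Or.inl hfree⟩
    refine ⟨⟨u, u + ((m:ℕ):ZMod (2*n)), rfl, ?_⟩,
      ⟨u+1, (u + ((m:ℕ):ZMod (2*n)))+1, rfl, ?_⟩, ?_,
      u, u + ((m:ℕ):ZMod (2*n)), Or.inl ⟨rfl, rfl⟩⟩
    · have hh := valp hn u m
      omega
    · have e1 : (u+1 : ZMod (2*n)) = u + ((1:ℕ):ZMod (2*n)) := by norm_num
      have e2 : (u + ((m:ℕ):ZMod (2*n))) + 1 = u + ((m+1:ℕ):ZMod (2*n)) := by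
        push_cast; ring
      rw [e1, e2, valp hn, valp hn]
      omega
    · refine ⟨u, u + ((m:ℕ):ZMod (2*n)), u + 1, (u + ((m:ℕ):ZMod (2*n))) + 1, rfl, rfl,
        ⟨?_, ?_⟩, ⟨?_, ?_⟩⟩
      · rw [add_sub_cancel_left, hval1]
        omega
      · rw [add_sub_cancel_left, hval1, hvm]
        omega
      · rw [add_sub_cancel_left, hval1]
        omega
      · rw [add_sub_cancel_left, hval1, val_sub_comm hn huv, hvm]
        omega

  · -- CASE s = -1 : drum is {u-1,v-1},{u,v}
    have hug' : (i = 1 ∧ u.val % 2 = 0) ∨ (i = 2 ∧ u.val % 2 = 1) := by omega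
    have hneg1 : ((2*n - 1 : ℕ) : ZMod (2*n)) = -1 := by
      have hh : ((2*n - 1 : ℕ) : ZMod (2*n)) + 1 = 0 := by
        rw [show (1 : ZMod (2*n)) = ((1:ℕ) : ZMod (2*n)) by norm_num, ← Nat.cast_add,
          show 2*n - 1 + 1 = 2*n by omega, ZMod.natCast_self]
      linear_combination hh
    have hmcast : ((m-1 : ℕ) : ZMod (2*n)) + 1 = ((m:ℕ) : ZMod (2*n)) := by
      have hh := cast_add_nat (N := 2*n) (m-1) 1 m (by omega)
      rwa [Nat.cast_one] at hh
    obtain ⟨z, hzM⟩ := partner_exists hM (u + ((m-1:ℕ) : ZMod (2*n)))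
    have hzE : s(u + ((m-1:ℕ) : ZMod (2*n)), z) ∈ G.edgeSet := hM.1 hzM
    have hzadj : G.Adj (u + ((m-1:ℕ) : ZMod (2*n))) z := G.mem_edgeSet.mp hzE
    obtain ⟨ζ, hζdef⟩ : ∃ ζ : ℕ, ζ = (z - (u + ((m-1:ℕ) : ZMod (2*n)))).val := ⟨_, rfl⟩
    have hzrep : z = (u + ((m-1:ℕ) : ZMod (2*n))) + ((ζ:ℕ) : ZMod (2*n)) := by
      rw [hζdef]; exact zrep hn _ z
    have hζlt : ζ < 2*n := by rw [hζdef]; exact ZMod.val_lt _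
    have hζ0 : ζ ≠ 0 := by
      intro hh
      apply hzadj.ne
      rw [hzrep, hh]; norm_num
    have hζ1 : ζ ≠ 1 := by
      intro hh
      have hzv : z = u + ((m:ℕ) : ZMod (2*n)) := by
        rw [hzrep, hh, Nat.cast_one, add_assoc, hmcast]
      rw [hzv] at hzM
      have h1 : s(u + ((m:ℕ) : ZMod (2*n)), u + ((m-1:ℕ) : ZMod (2*n))) ∈ M := by
        rwa [Sym2.eq_swap] at hzM
      have h2 : s(u + ((m:ℕ) : ZMod (2*n)), u) ∈ M := by rwa [Sym2.eq_swap] at heM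
      have := partner_unique hM h1 h2
      have hm1 : ((m-1 : ℕ) : ZMod (2*n)) = 0 := by
        have hh2 := congrArg (fun x => x - u) this
        simpa using hh2
      have := congrArg ZMod.val hm1
      rw [ZMod.val_cast_of_lt (by omega), ZMod.val_zero] at this
      omega
    have hζtop : ζ ≠ 2*n - 1 := by
      intro hh
      have hzv : z = u + ((m-2 : ℕ) : ZMod (2*n)) := by
        rw [hzrep, hh, hneg1]
        rw [show ((m-1 : ℕ) : ZMod (2*n)) = ((m-2:ℕ) : ZMod (2*n)) + 1 from by
          have hh := cast_add_nat (N := 2*n) (m-2) 1 (m-1) (by omega)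
          rw [Nat.cast_one] at hh
          exact hh.symm]
        ring
      rw [hzv] at hzM
      have h1 : s(u + ((m-2:ℕ) : ZMod (2*n)), u + ((m-2+1:ℕ) : ZMod (2*n))) ∈ M := by
        rw [show ((m-2+1:ℕ) : ZMod (2*n)) = ((m-1:ℕ) : ZMod (2*n)) from by congr 1; omega]
        rwa [Sym2.eq_swap] at hzM
      have hcMh := hcM _ h1
      rw [col_cedge h u (m-2)] at hcMh
      split_ifs at hcMh <;> omega
    have hζchar : ∀ r : ℕ, r < 2*n → z = (u + ((m-1:ℕ) : ZMod (2*n))) + ((r:ℕ) : ZMod (2*n)) → ζ = r := by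
      intro r hr hzr
      apply cast_inj_small hn hζlt hr
      have := hzrep.symm.trans hzr
      exact add_left_cancel this
    have hncz : ¬ IsCEdge n s(u + ((m-1:ℕ) : ZMod (2*n)), z) := by
      intro hce
      rcases cedge_cases hce with h1 | h1
      · apply hζ1
        apply hζchar 1 (by omega)
        rw [h1, Nat.cast_one]
      · apply hζtop
        apply hζchar (2*n-1) (by omega)
        rw [hneg1]
        have : z = (u + ((m-1:ℕ) : ZMod (2*n))) - 1 := by rw [h1]; ring
        rw [this]; ring
    have hζeven : ζ % 2 = 0 := by
      have := chord_even h hzE hncz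
      rwa [← hζdef] at this
    have hζ2 : 2 ≤ ζ := by omega
    have hub : (u + ((m-1:ℕ) : ZMod (2*n))) + ((2*n - m + 1 : ℕ) : ZMod (2*n)) = u := by
      rw [add_assoc, cast_add_nat (N := 2*n) (m-1) (2*n - m + 1) (2*n) (by omega),
        ZMod.natCast_self, add_zero]
    have hζb : ζ < 2*n - m + 1 := by
      by_contra hge
      push_neg at hge
      have hzneβ : z ≠ u + ((m-1:ℕ) : ZMod (2*n)) := hzadj.ne'
      have hsp := Hmin z (u + ((m-1:ℕ) : ZMod (2*n)))
        (by rwa [Sym2.eq_swap]) (by rw [Sym2.eq_swap]; exact hncz)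
      rw [val_sub_comm hn (fun hh => hzneβ hh.symm), ← hζdef] at hsp
      omega
    have hζeq : ζ = 2*n - m := by
      by_contra hne
      have hζb2 : ζ + 1 < 2*n - m + 1 := by omega
      obtain ⟨N, hN, hmemN⟩ := pm_two h (u + ((m-1:ℕ) : ZMod (2*n))) ζ 1 (2*n - m + 1)
        (by omega) (by omega) (by omega) (by omega) (by omega) hζeven (by omega)
        (by rw [← hzrep]; exact hzE)
        (by
          rw [show ((u + ((m-1:ℕ):ZMod (2*n))) + ((1:ℕ):ZMod (2*n))) = u + ((m:ℕ):ZMod (2*n))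
            from by rw [Nat.cast_one, add_assoc, hmcast], hub, Sym2.eq_swap]
          exact hX)
      have he0 := hmemN 0 (by omega)
      rw [pf_at0] at he0
      norm_num at he0
      have hecl := hmemN (ζ+1) (by omega)
      have hv1 : pf ζ 1 (2*n - m + 1) (ζ+1) = ζ+1+1 := by
        rw [pf_eval (by omega) (by omega) (by omega) (by omega), if_pos (by omega),
          if_pos (by omega)]
      rw [hv1] at hecl
      have hmm := hmono N hN _ he0 _ hecl
      rw [← hzrep] at he0
      have hcz : c (s(u + ((m-1:ℕ) : ZMod (2*n)), (u + ((m-1:ℕ) : ZMod (2*n))) + ((ζ:ℕ):ZMod (2*n)))) = i := by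
        rw [← hzrep]; exact hcM _ hzM
      rw [hcz, col_cedge h (u + ((m-1:ℕ) : ZMod (2*n))) (ζ+1)] at hmm
      have hβpar := valp hn u (m-1)
      split_ifs at hmm <;> omega
    have hzu1 : z = u - 1 := by
      have hsum : ((m-1:ℕ):ZMod (2*n)) + ((2*n-m:ℕ):ZMod (2*n)) = -1 :=
        (cast_add_nat (N := 2*n) (m-1) (2*n-m) (2*n-1) (by omega)).trans hneg1
      rw [hzrep, hζeq, add_assoc, hsum]
      ring
    have he'' : s(u + ((m-1:ℕ) : ZMod (2*n)), u - 1) ∈ G.edgeSet := by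
      rw [← hzu1]; exact hzE
    have hidm : (u-1) + ((m:ℕ) : ZMod (2*n)) = u + ((m-1:ℕ) : ZMod (2*n)) := by
      rw [← hmcast]; ring
    have hXm : s(u - 1, (u-1) + ((m:ℕ) : ZMod (2*n))) ∈ G.edgeSet := by
      rw [hidm, Sym2.eq_swap]; exact he''
    -- colour of e''
    have hce'' : c (s(u - 1, (u-1) + ((m:ℕ) : ZMod (2*n)))) = i := by
      obtain ⟨N, hN, hmemN⟩ := pm_two h (u-1) m 1 (m+1) (by omega) (by omega) (by omega)
        (by omega) (by omega) hmeven (by omega) hXm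
        (by
          rw [show ((u-1) + ((1:ℕ):ZMod (2*n))) = u from by rw [Nat.cast_one]; ring,
            show ((u-1) + ((m+1:ℕ):ZMod (2*n))) = u + ((m:ℕ):ZMod (2*n)) from by
              push_cast; ring]
          exact hX)
      have he0 := hmemN 0 (by omega)
      rw [pf_at0] at he0
      norm_num at he0
      have he1 := hmemN 1 (by omega)
      rw [pf_atp (by omega) (by omega)] at he1
      have hmm := hmono N hN _ he0 _ he1
      rw [show ((u-1) + ((1:ℕ):ZMod (2*n))) = u from by rw [Nat.cast_one]; ring,
        show ((u-1) + ((m+1:ℕ):ZMod (2*n))) = u + ((m:ℕ):ZMod (2*n)) from by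
          push_cast; ring, ← hidef] at hmm
      exact hmm
    -- interior
    have hfree : ∀ k : ZMod (2*n), InArc n u (u + ((m-1:ℕ):ZMod (2*n))) k →
        (G.neighborSet k).ncard = 2 := by
      intro k hk
      obtain ⟨hk1, hk2⟩ := hk
      have hkv : ((u + ((m-1:ℕ):ZMod (2*n))) - u).val = m - 1 := by
        rw [add_sub_cancel_left, ZMod.val_cast_of_lt (by omega)]
      rw [hkv] at hk2
      obtain ⟨t, htdef⟩ : ∃ t : ℕ, t = (k - u).val := ⟨_, rfl⟩
      rw [← htdef] at hk1 hk2
      have hkrep : k = u + ((t : ℕ) : ZMod (2*n)) := by rw [htdef]; exact zrep hn u k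
      have ht1 : 1 ≤ t := hk1
      have htm : t ≤ m - 2 := by omega
      have hinj : ∀ s t' : ℕ, s < 2*n → t' < 2*n →
          (u + ((s:ℕ):ZMod (2*n)) : ZMod (2*n)) = u + ((t':ℕ):ZMod (2*n)) → s = t' := by
        intro s t' hs ht' heq
        exact cast_inj_small hn hs ht' (by exact add_left_cancel heq)
      have hsub1 : ∀ (ha hb : ℕ), ha < hb → hb < 2*n →
          ((u + ((hb:ℕ):ZMod (2*n))) - (u + ((ha:ℕ):ZMod (2*n))) : ZMod (2*n)).val = hb - ha := by
        intro ha hb h1 h2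
        have hh : (u + ((hb:ℕ):ZMod (2*n))) - (u + ((ha:ℕ):ZMod (2*n)))
            = ((hb - ha : ℕ) : ZMod (2*n)) := by
          push_cast [Nat.cast_sub (le_of_lt h1)]; ring
        rw [hh, ZMod.val_cast_of_lt (by omega)]
      have hsub : G.neighborSet k ⊆ {k - 1, k + 1} := by
        intro w hw
        simp only [SimpleGraph.mem_neighborSet] at hw
        by_contra hwn
        simp only [Set.mem_insert_iff, Set.mem_singleton_iff] at hwn
        push_neg at hwn
        obtain ⟨hw1, hw2⟩ := hwn
        obtain ⟨η, hηdef⟩ : ∃ η : ℕ, η = (w - u).val := ⟨_, rfl⟩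
        have hwrep : w = u + ((η : ℕ) : ZMod (2*n)) := by rw [hηdef]; exact zrep hn u w
        have hηlt : η < 2*n := by rw [hηdef]; exact ZMod.val_lt _
        have hηt : η ≠ t := by
          intro hh
          exact hw.ne (by rw [hkrep, hwrep, hh])
        have hηt1 : η ≠ t + 1 := by
          intro hh
          apply hw2
          rw [hwrep, hh, hkrep]; push_cast; ring
        have hηt0 : η ≠ t - 1 := by
          intro hh
          apply hw1
          rw [hwrep, hh, hkrep]
          push_cast [Nat.cast_sub (by omega : 1 ≤ t)]; ring
        have hkwE : s(k, w) ∈ G.edgeSet := G.mem_edgeSet.mpr hw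
        have hnckw : ¬ IsCEdge n s(k, w) := by
          intro hce
          rcases cedge_cases hce with h1 | h1
          · apply hηt1
            apply hinj η (t+1) hηlt (by omega)
            rw [← hwrep, h1, hkrep]; push_cast; ring
          · apply hηt0
            apply hinj η (t-1) hηlt (by omega)
            rw [← hwrep, show w = k - 1 from by rw [h1]; ring, hkrep]
            push_cast [Nat.cast_sub (by omega : 1 ≤ t)]; ring
        have hηm : m < η := by
          by_contra hle
          push_neg at hle
          rcases Nat.lt_or_ge η t with hlt | hge
          · have hsp := Hmin w k (by rwa [Sym2.eq_swap]) (by rw [Sym2.eq_swap]; exact hnckw)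
            rw [hkrep, hwrep, hsub1 η t hlt (by omega)] at hsp
            omega
          · have hgt : t < η := by omega
            have hsp := Hmin k w hkwE hnckw
            rw [hkrep, hwrep, hsub1 t η hgt (by omega)] at hsp
            omega
        have hηpar : η % 2 = t % 2 := by
          have hpp := chord_even h hkwE hnckw
          rw [hkrep, hwrep, hsub1 t η (by omega) (by omega)] at hpp
          omega
        by_cases htpar : t % 2 = 1
        · obtain ⟨N, hN, hmemN⟩ := pm_two h u m t η (by omega) (by omega) hηm (by omega)
            htpar hmeven (by omega) hX
            (by rw [← hkrep, ← hwrep]; exact hkwE)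
          have he0 := hmemN 0 (by omega)
          rw [pf_at0] at he0
          norm_num at he0
          have hecl := hmemN (t+1) (by omega)
          have hvt : pf m t η (t+1) = t+1+1 := by
            rw [pf_eval (by omega) (by omega) (by omega) (by omega), if_neg (by omega),
              if_neg (by omega)]
          rw [hvt] at hecl
          have hmm := hmono N hN _ he0 _ hecl
          rw [col_cedge h u (t+1), ← hidef] at hmm
          split_ifs at hmm <;> omega
        · obtain ⟨N, hN, hmemN⟩ := pm_two h (u-1) m (t+1) (η+1) (by omega) (by omega)
            (by omega) (by omega) (by omega) hmeven (by omega) hXm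
            (by
              have h1 : (u-1) + ((t+1:ℕ) : ZMod (2*n)) = u + ((t:ℕ):ZMod (2*n)) := by
                push_cast; ring
              have h2 : (u-1) + ((η+1:ℕ) : ZMod (2*n)) = u + ((η:ℕ):ZMod (2*n)) := by
                push_cast; ring
              rw [h1, h2, ← hkrep, ← hwrep]; exact hkwE)
          have he0 := hmemN 0 (by omega)
          rw [pf_at0] at he0
          norm_num at he0
          have he1 := hmemN 1 (by omega)
          have hv1 : pf m (t+1) (η+1) 1 = 1+1 := by
            rw [pf_eval (by omega) (by omega) (by omega) (by omega), if_pos (by omega),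
              if_pos (by omega)]
          rw [hv1] at he1
          have hmm := hmono N hN _ he0 _ he1
          rw [hce'', col_cedge h (u-1) 1] at hmm
          have hum1 : (u - 1 : ZMod (2*n)) = u + ((2*n-1:ℕ) : ZMod (2*n)) := by
            rw [hneg1]; ring
          have hpar1 : (u-1 : ZMod (2*n)).val % 2 = (u.val + (2*n-1)) % 2 := by
            rw [hum1]; exact valp hn u (2*n-1)
          split_ifs at hmm <;> omega
      have hsup : {k - 1, k + 1} ⊆ G.neighborSet k := by
        intro w hw
        simp only [Set.mem_insert_iff, Set.mem_singleton_iff] at hw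
        rcases hw with rfl | rfl
        · simp only [SimpleGraph.mem_neighborSet]
          have hh := hC (k - 1)
          rw [sub_add_cancel] at hh
          exact hh.symm
        · exact hC k
      rw [subset_antisymm hsub hsup]
      rw [Set.ncard_pair]
      intro hcontra
      have h2 : ((2:ℕ) : ZMod (2*n)) = 0 := by push_cast; linear_combination -hcontra
      have hval2 := congrArg ZMod.val h2
      rw [ZMod.val_cast_of_lt (by omega : (2:ℕ) < 2*n), ZMod.val_zero] at hval2
      omega
    -- assembly
    have hval1 : (1 : ZMod (2*n)).val = 1 := by
      rw [show (1 : ZMod (2*n)) = ((1:ℕ):ZMod (2*n)) by norm_num,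
        ZMod.val_cast_of_lt (by omega)]
    have hA : (u - 1 + 1 : ZMod (2*n)) = u := by ring
    have hB : (u + ((m-1:ℕ):ZMod (2*n))) + 1 = u + ((m:ℕ):ZMod (2*n)) := by
      rw [add_assoc, hmcast]
    have hmne : ((m:ℕ) : ZMod (2*n)) ≠ 0 := by
      intro hh
      have := congrArg ZMod.val hh
      rw [ZMod.val_cast_of_lt hmlt, ZMod.val_zero] at this
      omega
    refine ⟨u - 1, u + ((m-1:ℕ):ZMod (2*n)), ?_, ?_, ?_, Or.inl ?_⟩
    · rw [Sym2.eq_swap]; exact he''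
    · rw [hA, hB]; exact hX
    · rw [hA, hB]
      refine ⟨⟨u - 1, u + ((m-1:ℕ):ZMod (2*n)), rfl, ?_⟩,
        ⟨u, u + ((m:ℕ):ZMod (2*n)), rfl, ?_⟩, ?_,
        u - 1, u + ((m-1:ℕ):ZMod (2*n)), Or.inl ⟨rfl, by rw [hA, hB]⟩⟩
      · have hum1 : (u - 1 : ZMod (2*n)) = u + ((2*n-1:ℕ) : ZMod (2*n)) := by
          rw [hneg1]; ring
        rw [hum1, valp hn, valp hn]
        omega
      · rw [valp hn]
        omega
      · refine ⟨u - 1, u + ((m-1:ℕ):ZMod (2*n)), u, u + ((m:ℕ):ZMod (2*n)), rfl, rfl,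
          ⟨?_, ?_⟩, ⟨?_, ?_⟩⟩
        · rw [show u - (u - 1) = (1 : ZMod (2*n)) from by ring, hval1]
          omega
        · rw [show u - (u - 1) = (1 : ZMod (2*n)) from by ring, hval1,
            show (u + ((m-1:ℕ):ZMod (2*n))) - (u - 1) = ((m:ℕ):ZMod (2*n)) from by
              rw [← hmcast]; ring,
            ZMod.val_cast_of_lt hmlt]
          omega
        · rw [show (u + ((m:ℕ):ZMod (2*n))) - (u + ((m-1:ℕ):ZMod (2*n))) = (1 : ZMod (2*n))
              from by rw [← hmcast]; ring, hval1]
          omega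
        · rw [show (u + ((m:ℕ):ZMod (2*n))) - (u + ((m-1:ℕ):ZMod (2*n))) = (1 : ZMod (2*n))
              from by rw [← hmcast]; ring, hval1,
            show (u - 1) - (u + ((m-1:ℕ):ZMod (2*n))) = -((m:ℕ):ZMod (2*n)) from by
              rw [← hmcast]; ring]
          haveI : NeZero ((m:ℕ) : ZMod (2*n)) := ⟨hmne⟩
          rw [ZMod.val_neg_of_ne_zero, ZMod.val_cast_of_lt hmlt]
          omega
    · intro k hk
      rw [hA] at hk
      exact hfree k hk
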